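/- Let $X$ be a non-negative random variable with independent copy $X'$, and define $\kappa(X) = \mathbb{E}|\tfrac{X-X'}{X+X'}|$ with convention $0/0=0$. Then: (a) $\kappa(X+Y) \leq \kappa(X) + \kappa(Y)$ for non-negative $X, Y$ (with $(X',Y')$ an independent copy of $(X,Y)$); (b) $\kappa(\lambda X) = \kappa(X)$ for any $\lambda > 0$; (c) $\kappa(1/X) = \kappa(X)$ when $X > 0$ almost surely. -/

import Mathlib

open MeasureTheory

/-- The discrepancy `κ` of (the law of) a nonnegative random variable:
`κ(X) = 𝔼|(X - X')/(X + X')|` with `X'` an independent copy of `X`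
(convention `0/0 = 0`, which is the Lean convention for division). -/
noncomputable def kappa (μ : Measure ℝ) : ℝ :=
  ∫ p : ℝ × ℝ, |(p.1 - p.2) / (p.1 + p.2)| ∂(μ.prod μ)

lemma ae_prod_of_ae {α β : Type*} [MeasurableSpace α] [MeasurableSpace β]
    {μ : Measure α} {ν : Measure β} [SFinite μ] [SFinite ν]
    {p : α → Prop} {q : β → Prop} (hp : ∀ᵐ x ∂μ, p x) (hq : ∀ᵐ y ∂ν, q y) :
    ∀ᵐ z ∂μ.prod ν, p z.1 ∧ q z.2 := by
  rw [ae_iff] at hp hq ⊢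
  have h0 : (μ.prod ν) (({x | ¬ p x} ×ˢ (Set.univ : Set β)) ∪
      ((Set.univ : Set α) ×ˢ {y | ¬ q y})) = 0 := by
    apply measure_union_null <;> simp [Measure.prod_prod, hp, hq]
  refine measure_mono_null (fun z hz => ?_) h0
  simp only [Set.mem_setOf_eq, not_and_or] at hz
  rcases hz with h | h
  · exact Or.inl ⟨h, Set.mem_univ _⟩
  · exact Or.inr ⟨Set.mem_univ _, h⟩

lemma abs_div_le_one {x y : ℝ} (hx : 0 ≤ x) (hy : 0 ≤ y) : |(x - y) / (x + y)| ≤ 1 := by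
  rw [abs_div]
  apply div_le_one_of_le₀ _ (abs_nonneg _)
  rw [abs_of_nonneg (add_nonneg hx hy)]
  exact abs_le.mpr ⟨by linarith, by linarith⟩

lemma key_ineq {a a' b b' : ℝ} (ha : 0 ≤ a) (ha' : 0 ≤ a') (hb : 0 ≤ b) (hb' : 0 ≤ b') :
    |((a + b) - (a' + b')) / ((a + b) + (a' + b'))| ≤
      |(a - a') / (a + a')| + |(b - b') / (b + b')| := by
  rcases eq_or_lt_of_le (add_nonneg ha ha') with h1 | h1
  · have haz : a = 0 := by linarith
    have haz' : a' = 0 := by linarith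
    simp [haz, haz']
  rcases eq_or_lt_of_le (add_nonneg hb hb') with h2 | h2
  · have hbz : b = 0 := by linarith
    have hbz' : b' = 0 := by linarith
    simp [hbz, hbz']
  rw [abs_div, abs_div, abs_div, abs_of_pos h1, abs_of_pos h2,
    abs_of_pos (by linarith : (0:ℝ) < (a + b) + (a' + b')),
    (by ring : (a + b) + (a' + b') = (a + a') + (b + b'))]
  calc |(a + b) - (a' + b')| / ((a + a') + (b + b'))
      ≤ (|a - a'| + |b - b'|) / ((a + a') + (b + b')) := by
        gcongr
        calc |(a + b) - (a' + b')| = |(a - a') + (b - b')| := by ring_nf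
          _ ≤ |a - a'| + |b - b'| := abs_add_le _ _
    _ = |a - a'| / ((a + a') + (b + b')) + |b - b'| / ((a + a') + (b + b')) := add_div _ _ _
    _ ≤ |a - a'| / (a + a') + |b - b'| / (b + b') :=
        add_le_add (div_le_div_of_nonneg_left (abs_nonneg _) h1 (by linarith))
          (div_le_div_of_nonneg_left (abs_nonneg _) h2 (by linarith))

lemma measF : Measurable (fun p : ℝ × ℝ => |(p.1 - p.2) / (p.1 + p.2)|) :=
  ((measurable_fst.sub measurable_snd).div (measurable_fst.add measurable_snd)).abs

lemma integrable_bdd {α : Type*} [MeasurableSpace α] {ν : Measure α} [IsFiniteMeasure ν]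
    {g : α → ℝ} (hm : AEStronglyMeasurable g ν) (hb : ∀ᵐ x ∂ν, ‖g x‖ ≤ 1) :
    Integrable g ν :=
  (integrable_const 1).mono' hm hb

/-- (a) subadditivity of `κ` under sums of (possibly dependent) nonnegative variables,
(b) scale invariance `κ(λX) = κ(X)` for `λ > 0`, and
(c) inversion invariance `κ(1/X) = κ(X)` for a.s. positive `X`. -/
theorem kappa_props :
    (∀ (μ : Measure (ℝ × ℝ)), IsProbabilityMeasure μ → (∀ᵐ p ∂μ, 0 ≤ p.1 ∧ 0 ≤ p.2) →
      kappa (μ.map (fun p => p.1 + p.2)) ≤ kappa (μ.map Prod.fst) + kappa (μ.map Prod.snd)) ∧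
    (∀ (μ : Measure ℝ), IsProbabilityMeasure μ → (∀ᵐ x ∂μ, 0 ≤ x) → ∀ l : ℝ, 0 < l →
      kappa (μ.map (fun x => l * x)) = kappa μ) ∧
    (∀ (μ : Measure ℝ), IsProbabilityMeasure μ → (∀ᵐ x ∂μ, 0 < x) →
      kappa (μ.map (fun x => 1 / x)) = kappa μ) := by
  refine ⟨?_, ?_, ?_⟩
  · -- (a) subadditivity
    intro μ hμ h0
    have hs : Measurable (fun p : ℝ × ℝ => p.1 + p.2) := measurable_fst.add measurable_snd
    have hae : ∀ᵐ q ∂(μ.prod μ), (0 ≤ q.1.1 ∧ 0 ≤ q.1.2) ∧ (0 ≤ q.2.1 ∧ 0 ≤ q.2.2) :=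
      ae_prod_of_ae h0 h0
    have e1 : kappa (μ.map (fun p => p.1 + p.2)) =
        ∫ q : (ℝ × ℝ) × (ℝ × ℝ),
          |((q.1.1 + q.1.2) - (q.2.1 + q.2.2)) / ((q.1.1 + q.1.2) + (q.2.1 + q.2.2))|
          ∂(μ.prod μ) := by
      unfold kappa
      rw [Measure.map_prod_map _ _ hs hs,
        integral_map (hs.prodMap hs).aemeasurable measF.aestronglyMeasurable]
      rfl
    have e2 : kappa (μ.map Prod.fst) =
        ∫ q : (ℝ × ℝ) × (ℝ × ℝ), |(q.1.1 - q.2.1) / (q.1.1 + q.2.1)| ∂(μ.prod μ) := by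
      unfold kappa
      rw [Measure.map_prod_map _ _ measurable_fst measurable_fst,
        integral_map (measurable_fst.prodMap measurable_fst).aemeasurable
          measF.aestronglyMeasurable]
      rfl
    have e3 : kappa (μ.map Prod.snd) =
        ∫ q : (ℝ × ℝ) × (ℝ × ℝ), |(q.1.2 - q.2.2) / (q.1.2 + q.2.2)| ∂(μ.prod μ) := by
      unfold kappa
      rw [Measure.map_prod_map _ _ measurable_snd measurable_snd,
        integral_map (measurable_snd.prodMap measurable_snd).aemeasurable
          measF.aestronglyMeasurable]
      rfl
    rw [e1, e2, e3]
    have m1 : Measurable (fun q : (ℝ × ℝ) × (ℝ × ℝ) => |(q.1.1 - q.2.1) / (q.1.1 + q.2.1)|) :=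
      measF.comp (measurable_fst.fst.prodMk measurable_snd.fst)
    have m2 : Measurable (fun q : (ℝ × ℝ) × (ℝ × ℝ) => |(q.1.2 - q.2.2) / (q.1.2 + q.2.2)|) :=
      measF.comp (measurable_fst.snd.prodMk measurable_snd.snd)
    have mL : Measurable (fun q : (ℝ × ℝ) × (ℝ × ℝ) =>
        |((q.1.1 + q.1.2) - (q.2.1 + q.2.2)) / ((q.1.1 + q.1.2) + (q.2.1 + q.2.2))|) :=
      measF.comp ((measurable_fst.fst.add measurable_fst.snd).prodMk
        (measurable_snd.fst.add measurable_snd.snd))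
    have int1 : Integrable (fun q : (ℝ × ℝ) × (ℝ × ℝ) =>
        |(q.1.1 - q.2.1) / (q.1.1 + q.2.1)|) (μ.prod μ) := by
      refine integrable_bdd m1.aestronglyMeasurable ?_
      filter_upwards [hae] with q hq
      rw [Real.norm_eq_abs, abs_abs]
      exact abs_div_le_one hq.1.1 hq.2.1
    have int2 : Integrable (fun q : (ℝ × ℝ) × (ℝ × ℝ) =>
        |(q.1.2 - q.2.2) / (q.1.2 + q.2.2)|) (μ.prod μ) := by
      refine integrable_bdd m2.aestronglyMeasurable ?_
      filter_upwards [hae] with q hq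
      rw [Real.norm_eq_abs, abs_abs]
      exact abs_div_le_one hq.1.2 hq.2.2
    have intL : Integrable (fun q : (ℝ × ℝ) × (ℝ × ℝ) =>
        |((q.1.1 + q.1.2) - (q.2.1 + q.2.2)) / ((q.1.1 + q.1.2) + (q.2.1 + q.2.2))|)
        (μ.prod μ) := by
      refine integrable_bdd mL.aestronglyMeasurable ?_
      filter_upwards [hae] with q hq
      rw [Real.norm_eq_abs, abs_abs]
      exact abs_div_le_one (add_nonneg hq.1.1 hq.1.2) (add_nonneg hq.2.1 hq.2.2)
    calc ∫ q : (ℝ × ℝ) × (ℝ × ℝ),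
          |((q.1.1 + q.1.2) - (q.2.1 + q.2.2)) / ((q.1.1 + q.1.2) + (q.2.1 + q.2.2))|
          ∂(μ.prod μ)
        ≤ ∫ q : (ℝ × ℝ) × (ℝ × ℝ),
            (|(q.1.1 - q.2.1) / (q.1.1 + q.2.1)| + |(q.1.2 - q.2.2) / (q.1.2 + q.2.2)|)
            ∂(μ.prod μ) := by
          refine integral_mono_ae intL (int1.add int2) ?_
          filter_upwards [hae] with q hq
          exact key_ineq hq.1.1 hq.2.1 hq.1.2 hq.2.2
      _ = _ := integral_add int1 int2
  · -- (b) scale invariance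
    intro μ hμ h0 l hl
    have hm : Measurable (fun x : ℝ => l * x) := measurable_id.const_mul l
    unfold kappa
    rw [Measure.map_prod_map _ _ hm hm,
      integral_map (hm.prodMap hm).aemeasurable measF.aestronglyMeasurable]
    refine integral_congr_ae (Filter.Eventually.of_forall fun q => ?_)
    show |(l * q.1 - l * q.2) / (l * q.1 + l * q.2)| = |(q.1 - q.2) / (q.1 + q.2)|
    rw [← mul_sub, ← mul_add, mul_div_mul_left _ _ hl.ne']
  · -- (c) inversion invariance
    intro μ hμ h0
    have hm : Measurable (fun x : ℝ => 1 / x) := measurable_const.div measurable_id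
    have hae : ∀ᵐ q ∂(μ.prod μ), 0 < q.1 ∧ 0 < q.2 := ae_prod_of_ae h0 h0
    unfold kappa
    rw [Measure.map_prod_map _ _ hm hm,
      integral_map (hm.prodMap hm).aemeasurable measF.aestronglyMeasurable]
    refine integral_congr_ae ?_
    filter_upwards [hae] with q hq
    obtain ⟨hx, hy⟩ := hq
    show |(1 / q.1 - 1 / q.2) / (1 / q.1 + 1 / q.2)| = |(q.1 - q.2) / (q.1 + q.2)|
    have h : (1 / q.1 - 1 / q.2) / (1 / q.1 + 1 / q.2) = (q.2 - q.1) / (q.2 + q.1) := by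
      rw [div_eq_div_iff (by positivity) (by positivity)]
      field_simp
    rw [h, abs_div, abs_div, abs_sub_comm, add_comm]
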